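/- Define κ_m := C(2m, m) · √(π·m) · e^{1/(8m)} / 2^{2m} for integers m ≥ 1. Then the sequence (κ_m) is strictly decreasing in m and converges to 1 as m → ∞. -/

import Mathlib

open Real

/-- `κ_m := C(2m,m)·√(πm)·e^{1/(8m)}/2^{2m}`. -/
noncomputable def kappaSeq (m : ℕ) : ℝ :=
  ((2 * m).choose m : ℝ) * Real.sqrt (π * (m : ℝ)) * Real.exp (1 / (8 * (m : ℝ))) / 2 ^ (2 * m)

lemma kappa_key (M : ℝ) (hM : 1 ≤ M) :
    (2*M+1) * Real.sqrt (M+1) * Real.exp (1/(8*(M+1))) <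
      2*(M+1) * Real.sqrt M * Real.exp (1/(8*M)) := by
  have hM0 : 0 < M := lt_of_lt_of_le one_pos hM
  have hM1 : 0 < M + 1 := by linarith
  have hd : 1/(8*M) = 1/(8*(M+1)) + 1/(8*M*(M+1)) := by
    field_simp
  rw [hd, Real.exp_add]
  set d : ℝ := 1/(8*M*(M+1)) with hd'
  have hdpos : 0 < d := by positivity
  have key : (2*M+1) * Real.sqrt (M+1) < 2*(M+1) * Real.sqrt M * Real.exp d := by
    have hexp : 2*d + 1 < Real.exp (2*d) := Real.add_one_lt_exp (by positivity : (2:ℝ)*d ≠ 0)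
    refine lt_of_pow_lt_pow_left₀ 2 (by positivity) ?_
    have hs1 : Real.sqrt (M+1) ^ 2 = M + 1 := Real.sq_sqrt hM1.le
    have hs2 : Real.sqrt M ^ 2 = M := Real.sq_sqrt hM0.le
    have hexp2 : Real.exp d ^ 2 = Real.exp (2*d) := by
      rw [← Real.exp_nat_mul]; norm_num [mul_comm]
    have expand : ((2*M+1) * Real.sqrt (M+1)) ^ 2 = (2*M+1)^2 * (M+1) := by
      rw [mul_pow, hs1]
    have expand2 : (2*(M+1) * Real.sqrt M * Real.exp d) ^ 2
        = 4*(M+1)^2 * M * Real.exp (2*d) := by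
      rw [mul_pow, mul_pow, hs2, hexp2]; ring
    rw [expand, expand2]
    have h2d : 4*(M+1)^2 * M * (2*d) = M + 1 := by
      rw [hd']; field_simp; ring
    nlinarith [mul_lt_mul_of_pos_left hexp (show (0:ℝ) < 4*(M+1)^2*M by positivity)]
  calc (2*M+1) * Real.sqrt (M+1) * Real.exp (1/(8*(M+1)))
      < (2*(M+1) * Real.sqrt M * Real.exp d) * Real.exp (1/(8*(M+1))) := by
        exact mul_lt_mul_of_pos_right key (Real.exp_pos _)
    _ = 2*(M+1) * Real.sqrt M * (Real.exp (1/(8*(M+1))) * Real.exp d) := by ring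

lemma kappa_step (m : ℕ) (hm : 1 ≤ m) : kappaSeq (m+1) < kappaSeq m := by
  have hM : (1:ℝ) ≤ (m:ℝ) := by exact_mod_cast hm
  set M : ℝ := (m:ℝ) with hMdef
  have hM0 : 0 < M := lt_of_lt_of_le one_pos hM
  have hc : 0 < (((2*m).choose m : ℕ) : ℝ) := by
    exact_mod_cast Nat.choose_pos (by omega)
  set c : ℝ := (((2*m).choose m : ℕ) : ℝ)
  set c' : ℝ := (((2*(m+1)).choose (m+1) : ℕ) : ℝ)
  have hcc : (M+1) * c' = 2*(2*M+1) * c := by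
    have := Nat.succ_mul_centralBinom_succ m
    have h2 : ((m+1) * Nat.centralBinom (m+1) : ℕ) = (2 * (2*m+1) * Nat.centralBinom m : ℕ) := this
    have := congrArg (fun n : ℕ => (n : ℝ)) h2
    push_cast [Nat.centralBinom] at this
    convert this using 2 <;> push_cast <;> ring
  have key := kappa_key M hM
  unfold kappaSeq
  rw [div_lt_div_iff₀ (by positivity) (by positivity)]
  push_cast
  have hπM : Real.sqrt (π * (M+1)) = Real.sqrt π * Real.sqrt (M+1) :=
    Real.sqrt_mul pi_pos.le _
  have hπM2 : Real.sqrt (π * M) = Real.sqrt π * Real.sqrt M :=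
    Real.sqrt_mul pi_pos.le _
  have hpow : (2:ℝ) ^ (2*(m+1)) = 2 ^ (2*m) * 4 := by
    rw [show 2*(m+1) = 2*m + 2 by ring, pow_add]; norm_num
  rw [hπM, hπM2, hpow]
  have hP : (0:ℝ) < 2 ^ (2*m) := by positivity
  rw [show c' * (Real.sqrt π * Real.sqrt (M+1)) * Real.exp (1/(8*(M+1))) * 2^(2*m)
      = (c' * (Real.sqrt π * Real.sqrt (M+1)) * Real.exp (1/(8*(M+1)))) * 2^(2*m) from rfl]
  have main : c' * (Real.sqrt π * Real.sqrt (M+1)) * Real.exp (1/(8*(M+1)))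
      < c * (Real.sqrt π * Real.sqrt M) * Real.exp (1/(8*M)) * 4 := by
    have hM1 : (0:ℝ) < M + 1 := by linarith
    rw [← mul_lt_mul_iff_right₀ hM1]
    calc (M+1) * (c' * (Real.sqrt π * Real.sqrt (M+1)) * Real.exp (1/(8*(M+1))))
        = ((M+1) * c') * (Real.sqrt π * Real.sqrt (M+1) * Real.exp (1/(8*(M+1)))) := by ring
      _ = (2*(2*M+1)*c) * (Real.sqrt π * Real.sqrt (M+1) * Real.exp (1/(8*(M+1)))) := by
          rw [hcc]
      _ = (2*c*Real.sqrt π) * ((2*M+1) * Real.sqrt (M+1) * Real.exp (1/(8*(M+1)))) := by ring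
      _ < (2*c*Real.sqrt π) * (2*(M+1) * Real.sqrt M * Real.exp (1/(8*M))) := by
          refine mul_lt_mul_of_pos_left key ?_
          have : (0:ℝ) < Real.sqrt π := Real.sqrt_pos.mpr pi_pos
          positivity
      _ = (M+1) * (c * (Real.sqrt π * Real.sqrt M) * Real.exp (1/(8*M)) * 4) := by ring
  calc c' * (Real.sqrt π * Real.sqrt (M+1)) * Real.exp (1/(8*(M+1))) * 2^(2*m)
      < (c * (Real.sqrt π * Real.sqrt M) * Real.exp (1/(8*M)) * 4) * 2^(2*m) :=
        mul_lt_mul_of_pos_right main hP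
    _ = c * (Real.sqrt π * Real.sqrt M) * Real.exp (1/(8*M)) * (2^(2*m) * 4) := by ring

lemma kappa_eq_stirling (m : ℕ) (hm : 1 ≤ m) :
    kappaSeq m = Stirling.stirlingSeq (2*m) / (Stirling.stirlingSeq m)^2
      * Real.sqrt π * Real.exp (1/(8*(m:ℝ))) := by
  have hM0 : (0:ℝ) < (m:ℝ) := by exact_mod_cast hm
  unfold kappaSeq Stirling.stirlingSeq
  rw [Nat.cast_choose ℝ (by omega : m ≤ 2*m), show 2*m - m = m by omega]
  have h2m : ((2*m : ℕ) : ℝ) = 2 * (m:ℝ) := by push_cast; ring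
  rw [h2m]
  have hs4 : Real.sqrt (2*(2*(m:ℝ))) = 2 * Real.sqrt (m:ℝ) := by
    rw [show (2:ℝ)*(2*(m:ℝ)) = 2^2 * (m:ℝ) by ring, Real.sqrt_mul (by positivity),
      Real.sqrt_sq (by norm_num : (0:ℝ) ≤ 2)]
  have hπM : Real.sqrt (π * (m:ℝ)) = Real.sqrt π * Real.sqrt (m:ℝ) :=
    Real.sqrt_mul pi_pos.le _
  have hpow : ((2*(m:ℝ))/Real.exp 1)^(2*m) = 2^(2*m) * ((m:ℝ)/Real.exp 1)^(2*m) := by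
    rw [show (2*(m:ℝ))/Real.exp 1 = 2*((m:ℝ)/Real.exp 1) by ring, mul_pow]
  rw [hs4, hπM, hpow]
  have hX : ((m.factorial:ℝ)/(Real.sqrt (2*(m:ℝ))*((m:ℝ)/Real.exp 1)^m))^2
      = (m.factorial:ℝ)^2/((2*(m:ℝ))*(((m:ℝ)/Real.exp 1)^m)^2) := by
    rw [div_pow, mul_pow, Real.sq_sqrt (by positivity)]
  have hm2 : ((m:ℝ)/Real.exp 1)^(2*m) = (((m:ℝ)/Real.exp 1)^m)^2 := by
    rw [← pow_mul, mul_comm]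
  rw [hX, hm2]
  have hsMne : Real.sqrt (m:ℝ) ≠ 0 := by positivity
  have hfac : (m.factorial:ℝ) ≠ 0 := by exact_mod_cast (Nat.factorial_pos m).ne'
  have hpowne : ((m:ℝ)/Real.exp 1)^m ≠ 0 := pow_ne_zero _ (by positivity)
  field_simp
  ring_nf
  rw [Real.sq_sqrt hM0.le]

/-- The sequence `κ_m` is strictly decreasing in `m ≥ 1` and converges to `1`. -/
theorem kappa_strictAnti_tendsto_one :
    StrictAntiOn kappaSeq (Set.Ici 1) ∧
    Filter.Tendsto kappaSeq Filter.atTop (nhds 1) := by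
  constructor
  · have hg : StrictAnti (fun n : ℕ => kappaSeq (n+1)) :=
      strictAnti_nat_of_succ_lt (fun n => kappa_step (n+1) (by omega))
    intro a ha b hb hab
    have ha1 : 1 ≤ a := ha
    have hb1 : 1 ≤ b := hb
    have := hg (show a - 1 < b - 1 by omega)
    simpa [Nat.sub_add_cancel ha1, Nat.sub_add_cancel hb1] using this
  · have h2 : Filter.Tendsto (fun n : ℕ => 2*n) Filter.atTop Filter.atTop :=
      Filter.tendsto_atTop_mono (fun n => by simp [two_mul]) Filter.tendsto_id
    have h1 : Filter.Tendsto (fun m : ℕ => Stirling.stirlingSeq (2*m)) Filter.atTop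
        (nhds (Real.sqrt π)) := Stirling.tendsto_stirlingSeq_sqrt_pi.comp h2
    have hsq : Filter.Tendsto (fun m : ℕ => (Stirling.stirlingSeq m)^2) Filter.atTop
        (nhds π) := by
      have := Stirling.tendsto_stirlingSeq_sqrt_pi.pow 2
      rwa [Real.sq_sqrt pi_pos.le] at this
    have hexp : Filter.Tendsto (fun m : ℕ => Real.exp (1/(8*(m:ℝ)))) Filter.atTop
        (nhds 1) := by
      have h8 : Filter.Tendsto (fun m : ℕ => 8*(m:ℝ)) Filter.atTop Filter.atTop :=
        Filter.Tendsto.const_mul_atTop (by norm_num) tendsto_natCast_atTop_atTop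
      have : Filter.Tendsto (fun m : ℕ => 1/(8*(m:ℝ))) Filter.atTop (nhds 0) := by
        simpa [one_div, Function.comp_def] using tendsto_inv_atTop_zero.comp h8
      simpa [Function.comp_def] using (Real.continuous_exp.tendsto 0).comp this
    have hmain : Filter.Tendsto
        (fun m : ℕ => Stirling.stirlingSeq (2*m) / (Stirling.stirlingSeq m)^2
          * Real.sqrt π * Real.exp (1/(8*(m:ℝ)))) Filter.atTop
        (nhds (Real.sqrt π / π * Real.sqrt π * 1)) := by
      exact ((h1.div hsq pi_pos.ne').mul_const _).mul hexp
    have hval : Real.sqrt π / π * Real.sqrt π * 1 = 1 := by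
      rw [mul_one, div_mul_eq_mul_div, Real.mul_self_sqrt pi_pos.le, div_self pi_pos.ne']
    rw [hval] at hmain
    refine hmain.congr' ?_
    filter_upwards [Filter.eventually_ge_atTop 1] with m hm
    exact (kappa_eq_stirling m hm).symm
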